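/- Let σ : Fin 6 → List (Fin 6) be the edge-rewriting substitution of the Sierpiński Arrowhead Curve: σ(p) = [(p+1) mod 6, p, (p+5) mod 6] for p even and σ(q) = [(q+5) mod 6, q, (q+1) mod 6] for q odd, extended to words by concatenation. Then for every k ≥ 0, the word σ^k([0]) has length 3^k and its total displacement equals 2^k · u(0); that is, the sum over the letters d of σ^k([0]) of the unit vectors u(d) equals (2^k, 0). In particular the k-th approximation of the arrowhead curve runs from the left corner 0 to the right corner 2^k·u(0) of the big triangle. -/

import Mathlib

/-- The unit vector in direction `d·π/3`, viewing the plane as `ℂ`. -/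
noncomputable def dirU (d : Fin 6) : ℂ :=
  Complex.exp ((d : ℕ) * Real.pi / 3 * Complex.I)

/-- The position sequence of a direction word: `p₀ = 0`, `p_{m+1} = p_m + dirU (ds_m)`. -/
noncomputable def posSeq (ds : List (Fin 6)) (m : ℕ) : ℂ :=
  ((ds.take m).map dirU).sum

/-- The edge-rewriting substitution of the Sierpiński Arrowhead Curve:
`σ(p) = [p+1, p, p+5]` for `p` even and `σ(q) = [q+5, q, q+1]` for `q` odd
(addition in `Fin 6` is mod 6). -/
def sigmaAH (d : Fin 6) : List (Fin 6) :=
  if Even (d : ℕ) then [d + 1, d, d + 5] else [d + 5, d, d + 1]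

/-- Application of the substitution to a word, letterwise and concatenated. -/
def sigmaStep (w : List (Fin 6)) : List (Fin 6) := (w.map sigmaAH).flatten

private noncomputable abbrev omAH : ℂ := Complex.exp ((Real.pi : ℂ) / 3 * Complex.I)

lemma omAH_val : omAH = 1/2 + (Real.sqrt 3 / 2) * Complex.I := by
  have h : ((Real.pi / 3 : ℝ) : ℂ) = (Real.pi : ℂ) / 3 := by push_cast; ring
  rw [omAH, ← h, Complex.exp_mul_I, ← Complex.ofReal_cos, ← Complex.ofReal_sin,
    Real.cos_pi_div_three, Real.sin_pi_div_three]
  push_cast; ring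

lemma omAH_quad : omAH ^ 2 = omAH - 1 := by
  have h3 : ((Real.sqrt 3 : ℂ)) ^ 2 = 3 := by
    norm_cast
    rw [Real.sq_sqrt] <;> norm_num
  rw [omAH_val]
  linear_combination (Complex.I^2/4) * h3 + (3/4) * Complex.I_sq

lemma omAH_six : omAH ^ 6 = 1 := by
  linear_combination (omAH^4 + omAH^3 - omAH - 1) * omAH_quad

lemma omAH_sum : omAH ^ 5 + omAH = 1 := by
  linear_combination (omAH^3 + omAH^2 - 1) * omAH_quad

lemma dirU_eq (d : Fin 6) : dirU d = omAH ^ (d : ℕ) := by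
  rw [dirU, ← Complex.exp_nat_mul]
  ring_nf

lemma omAH_mod (n : ℕ) : omAH ^ (n % 6) = omAH ^ n := by
  conv_rhs => rw [← Nat.div_add_mod n 6]
  rw [pow_add, pow_mul, omAH_six, one_pow, one_mul]

open Fin.NatCast in
lemma sum_sigmaAH (d : Fin 6) : ((sigmaAH d).map dirU).sum = 2 * dirU d := by
  have hv : ∀ m : ℕ, dirU (d + (m : Fin 6)) = omAH ^ ((d : ℕ) + (((m : Fin 6)) : ℕ)) := by
    intro m
    rw [dirU_eq, Fin.val_add, omAH_mod]
  have h1 := hv 1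
  have h5 := hv 5
  norm_num at h1 h5
  have hd := dirU_eq d
  rw [sigmaAH]
  split <;> simp [h1, h5, hd] <;>
    linear_combination (omAH ^ (d : ℕ)) * omAH_sum

lemma sigmaStep_len (w : List (Fin 6)) : (sigmaStep w).length = 3 * w.length := by
  rw [sigmaStep]
  induction w with
  | nil => simp
  | cons a t ih =>
    simp only [List.map_cons, List.flatten_cons, List.length_append, List.length_cons, ih]
    have : (sigmaAH a).length = 3 := by rw [sigmaAH]; split <;> simp
    omega

lemma sigmaStep_sum (w : List (Fin 6)) :
    ((sigmaStep w).map dirU).sum = 2 * (w.map dirU).sum := by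
  rw [sigmaStep]
  induction w with
  | nil => simp
  | cons a t ih =>
    simp only [List.map_cons, List.flatten_cons, List.map_append, List.sum_append, ih,
      List.sum_cons, sum_sigmaAH]
    ring

/-- For every `k ≥ 0`, the word `σ^k([0])` has length `3^k` and its
total displacement is `2^k · u(0)`: the `k`-th approximation of the arrowhead curve runs
from the left corner `0` to the right corner `2^k · u(0)` of the big triangle. -/
theorem arrowhead_length_and_displacement (k : ℕ) :
    (sigmaStep^[k] [0]).length = 3 ^ k ∧
    ((sigmaStep^[k] [0]).map dirU).sum = (2 ^ k : ℂ) * dirU 0 := by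
  induction k with
  | zero => simp
  | succ n ih =>
    rw [Function.iterate_succ_apply', sigmaStep_len, sigmaStep_sum, ih.1, ih.2]
    constructor <;> ring
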